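/- Let G be a countable group, μ a non-degenerate probability measure on G, and ℏ : G → ℝ a seminorm (ℏ(g) ≥ 0, ℏ(1) = 0, ℏ(gh) ≤ ℏ(g) + ℏ(h), ℏ(g) = ℏ(g⁻¹)) that is unbounded on G (for every d there exists g ∈ G with ℏ(g) > d). Then for almost every increment sequence (X_i) with respect to the product measure μ^{⊗ℕ} on G^ℕ, the path τ_n = X₁⋯X_n satisfies lim sup_{n→∞} ℏ(τ_n) = ∞; in particular almost every path contains a subsequence (τ_{n_j}) with ℏ(τ_{n_j}) → ∞. -/

import Mathlib

open MeasureTheory Filter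

private lemma prod_split {G : Type*} [Group G] (X : ℕ → G) (a b : ℕ) :
    (List.ofFn fun i : Fin (a + b) => X (i : ℕ)).prod =
      (List.ofFn fun i : Fin a => X (i : ℕ)).prod *
        (List.ofFn fun j : Fin b => X (a + (j : ℕ))).prod := by
  rw [List.ofFn_add, List.prod_append]
  rfl

/-- If `μ` is a non-degenerate probability measure on a countable group `G` and `nrm`
is an unbounded seminorm on `G`, then for almost every increment sequence (with respect
to the product measure `P = μ^{⊗ℕ}`, characterized on cylinders) the path
`τ_n = X₁⋯X_n` satisfies `lim sup nrm(τ_n) = ∞`, i.e. for every `d` one has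
`nrm(τ_n) > d` for infinitely many `n`. -/
theorem stmt_8 {G : Type*} [Group G] [Countable G]
    [MeasurableSpace G] [DiscreteMeasurableSpace G]
    (μ : G → ENNReal) (hμ : ∑' g, μ g = 1)
    (hnd : ∀ g : G, ∃ L : List G, L ≠ [] ∧ (∀ x ∈ L, 0 < μ x) ∧ L.prod = g)
    (nrm : G → ℝ)
    (h1 : ∀ g : G, 0 ≤ nrm g) (h2 : nrm 1 = 0)
    (h3 : ∀ g h : G, nrm (g * h) ≤ nrm g + nrm h)
    (h4 : ∀ g : G, nrm g = nrm g⁻¹)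
    (hub : ∀ d : ℝ, ∃ g : G, d < nrm g)
    (P : Measure (ℕ → G)) [IsProbabilityMeasure P]
    (hP : ∀ (s : Finset ℕ) (c : ℕ → G),
      P {X | ∀ i ∈ s, X i = c i} = ∏ i ∈ s, μ (c i)) :
    ∀ᵐ X ∂P, ∀ d : ℝ, ∃ᶠ n in atTop,
      d < nrm ((List.ofFn fun i : Fin n => X (i : ℕ)).prod) := by
  have key : ∀ᵐ X ∂P, ∀ D : ℕ, ∃ᶠ n in atTop,
      (D : ℝ) < nrm ((List.ofFn fun i : Fin n => X (i : ℕ)).prod) := by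
    rw [ae_all_iff]
    intro D
    obtain ⟨g, hg⟩ := hub (2 * D + 1)
    obtain ⟨L, hL0, hLpos, hLprod⟩ := hnd g
    set ℓ := L.length with hℓdef
    have hℓ : 0 < ℓ := List.length_pos_iff.mpr hL0
    set c : ℕ → G := fun i => L.getD (i % ℓ) 1 with hc
    set s : ℕ → Finset ℕ := fun k => (Finset.range ℓ).image (fun j => k * ℓ + j) with hs
    set A : ℕ → Set (ℕ → G) := fun k => {X | ∀ i ∈ s k, X i = c i} with hA
    -- measurability
    have hAm : ∀ k, MeasurableSet (A k) := by
      intro k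
      have : A k = ⋂ i ∈ (s k : Set ℕ), (fun X : ℕ → G => X i) ⁻¹' {c i} := by
        ext X; simp [hA, Set.mem_iInter]
      rw [this]
      exact MeasurableSet.biInter (Finset.countable_toSet _)
        (fun i _ => (measurable_pi_apply i) (MeasurableSet.singleton _))
    -- value of c on block k
    have hcval : ∀ k, ∀ j ∈ Finset.range ℓ, c (k * ℓ + j) = L.getD j 1 := by
      intro k j hj
      simp only [hc]
      rw [Nat.add_comm, Nat.add_mul_mod_self_right, Nat.mod_eq_of_lt (Finset.mem_range.mp hj)]
    -- probability of A k
    have hPA : ∀ k, P (A k) = ∏ j ∈ Finset.range ℓ, μ (L.getD j 1) := by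
      intro k
      rw [hA]
      simp only
      rw [hP, hs]
      simp only
      rw [Finset.prod_image (by intro a _ b _ h; simp only at h; omega)]
      exact Finset.prod_congr rfl fun j hj => by rw [hcval k j hj]
    have hp0 : (∏ j ∈ Finset.range ℓ, μ (L.getD j 1)) ≠ 0 := by
      rw [Finset.prod_ne_zero_iff]
      intro j hj
      have : L.getD j 1 ∈ L := by
        rw [List.getD_eq_getElem L 1 (Finset.mem_range.mp hj)]
        exact List.getElem_mem _
      exact (hLpos _ this).ne'
    -- independence
    have hdisj : Set.PairwiseDisjoint (Set.univ : Set ℕ) s := by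
      intro k _ k' _ hkk'
      simp only [Function.onFun]
      rw [Finset.disjoint_left]
      intro i hi hi'
      simp only [hs, Finset.mem_image, Finset.mem_range] at hi hi'
      obtain ⟨j, hj, rfl⟩ := hi
      obtain ⟨j', hj', h⟩ := hi'
      exact hkk' (by nlinarith)
    have hind : ProbabilityTheory.iIndepSet A P := by
      rw [ProbabilityTheory.iIndepSet_iff_meas_biInter hAm]
      intro K
      have hInt : (⋂ k ∈ K, A k) = {X | ∀ i ∈ K.biUnion s, X i = c i} := by
        ext X
        simp only [Set.mem_iInter, hA, Set.mem_setOf_eq, Finset.mem_biUnion]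
        constructor
        · rintro h i ⟨k, hk, hik⟩
          exact h k hk i hik
        · intro h k hk i hik
          exact h i ⟨k, hk, hik⟩
      rw [hInt, hP, Finset.prod_biUnion (hdisj.subset (Set.subset_univ _))]
      exact Finset.prod_congr rfl fun k _ => (hP (s k) c).symm
    -- Borel–Cantelli
    have htsum : (∑' k, P (A k)) = ⊤ := by
      have : ∀ k : ℕ, P (A k) = ∏ j ∈ Finset.range ℓ, μ (L.getD j 1) := hPA
      rw [tsum_congr this]
      exact ENNReal.tsum_const_eq_top_of_ne_zero hp0
    have hBC := ProbabilityTheory.measure_limsup_eq_one hAm hind htsum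
    have hae : ∀ᵐ X ∂P, X ∈ limsup A atTop := by
      rw [ae_iff]
      have : {X : ℕ → G | ¬ X ∈ limsup A atTop} = (limsup A atTop)ᶜ := rfl
      rw [this, measure_compl (MeasurableSet.measurableSet_limsup hAm) (measure_ne_top _ _),
        hBC, measure_univ, tsub_self]
    filter_upwards [hae] with X hX
    have hfreq : ∃ᶠ k in atTop, X ∈ A k := mem_limsup_iff_frequently_mem.mp hX
    rw [frequently_atTop]
    intro N
    obtain ⟨k, hkN, hkA⟩ := frequently_atTop.mp hfreq N
    -- the segment on block k is L
    have hseg : (List.ofFn fun j : Fin ℓ => X (k * ℓ + (j : ℕ))) = L := by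
      conv_rhs => rw [← List.ofFn_get L]
      congr 1
      funext j
      rw [hkA _ (by simp only [hs, Finset.mem_image, Finset.mem_range]
                    exact ⟨j, j.isLt, rfl⟩),
        hcval k j (Finset.mem_range.mpr j.isLt), List.getD_eq_getElem L 1 j.isLt]
      rfl
    set τ : ℕ → G := fun n => (List.ofFn fun i : Fin n => X (i : ℕ)).prod with hτ
    have hstep : τ (k * ℓ + ℓ) = τ (k * ℓ) * g := by
      rw [hτ]
      simp only
      rw [prod_split X (k * ℓ) ℓ, hseg, hLprod]
    have hkℓ : N ≤ k * ℓ := le_trans hkN (Nat.le_mul_of_pos_right k hℓ)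
    by_cases hcase : (D : ℝ) < nrm (τ (k * ℓ))
    · exact ⟨k * ℓ, hkℓ, hcase⟩
    · refine ⟨k * ℓ + ℓ, le_trans hkℓ (Nat.le_add_right _ _), ?_⟩
      push_neg at hcase
      have : nrm g ≤ nrm (τ (k * ℓ)) + nrm (τ (k * ℓ + ℓ)) := by
        have := h3 (τ (k * ℓ))⁻¹ (τ (k * ℓ + ℓ))
        rw [hstep] at this ⊢
        simpa [← h4] using this
      linarith
  filter_upwards [key] with X hX d
  obtain ⟨D, hD⟩ := exists_nat_gt d
  exact (hX D).mono fun n hn => lt_trans hD hn
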